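/- Let C be a constructible subset of a Noetherian topological space X. Then C admits a presentation as a disjoint union ⋃_{i=1}^m (V_i' \ V_i''), where all V_i' and V_i'' are closed, V_1' ⊇ V_1'' ⊇ V_2' ⊇ V_2'' ⊇ ... ⊇ V_m' ⊇ V_m'', and no two consecutive sets in this chain share an irreducible component. -/

import Mathlib

open Set TopologicalSpace

variable {X : Type*} [TopologicalSpace X]

/-- A set is locally closed iff it is the difference of two closed sets. -/
def PaperLocallyClosed (s : Set X) : Prop :=
  ∃ V W : Set X, IsClosed V ∧ IsClosed W ∧ s = V \ W

/-- A set is constructible iff it is a finite union of locally closed sets. -/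
def PaperConstructible (s : Set X) : Prop :=
  ∃ (m : ℕ) (V : Fin m → Set X), (∀ i, PaperLocallyClosed (V i)) ∧ s = ⋃ i, V i

/-- `T` is an irreducible component of `V`: a maximal irreducible closed subset of `V`. -/
def IsIrredCompOf (T V : Set X) : Prop :=
  IsClosed T ∧ IsIrreducible T ∧ T ⊆ V ∧
    ∀ T' : Set X, IsClosed T' → IsIrreducible T' → T' ⊆ V → T ⊆ T' → T' = T

namespace CanonPres

lemma plc_closed {s : Set X} (h : IsClosed s) : PaperLocallyClosed s :=
  ⟨s, ∅, h, isClosed_empty, (diff_empty).symm⟩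

lemma plc_open {s : Set X} (h : IsOpen s) : PaperLocallyClosed s :=
  ⟨univ, sᶜ, isClosed_univ, isClosed_compl_iff.2 h, by simp⟩

lemma plc_inter {s t : Set X} (hs : PaperLocallyClosed s) (ht : PaperLocallyClosed t) :
    PaperLocallyClosed (s ∩ t) := by
  obtain ⟨V, W, hV, hW, rfl⟩ := hs
  obtain ⟨V', W', hV', hW', rfl⟩ := ht
  refine ⟨V ∩ V', W ∪ W', hV.inter hV', hW.union hW', ?_⟩
  ext x; simp only [mem_inter_iff, mem_diff, mem_union]; tauto

lemma pc_iff {s : Set X} : PaperConstructible s ↔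
    ∃ S : Set (Set X), S.Finite ∧ (∀ t ∈ S, PaperLocallyClosed t) ∧ s = ⋃₀ S := by
  constructor
  · rintro ⟨m, V, hV, rfl⟩
    refine ⟨range V, finite_range V, ?_, ?_⟩
    · rintro t ⟨i, rfl⟩; exact hV i
    · rw [sUnion_range]
  · rintro ⟨S, hSfin, hSlc, rfl⟩
    haveI := hSfin.fintype
    refine ⟨hSfin.toFinset.card, fun i => (hSfin.toFinset.equivFin.symm i : Set X), ?_, ?_⟩
    · intro i
      exact hSlc _ (by simpa using (hSfin.toFinset.equivFin.symm i).2)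
    · apply subset_antisymm
      · rintro x ⟨t, htS, hxt⟩
        exact mem_iUnion.2 ⟨hSfin.toFinset.equivFin ⟨t, hSfin.mem_toFinset.2 htS⟩, by simpa using hxt⟩
      · intro x hx
        obtain ⟨i, hxi⟩ := mem_iUnion.1 hx
        exact ⟨_, by simpa using (hSfin.toFinset.equivFin.symm i).2, hxi⟩

lemma pc_closed {s : Set X} (h : IsClosed s) : PaperConstructible s :=
  ⟨1, fun _ => s, fun _ => plc_closed h, (iUnion_const s).symm⟩

lemma pc_open {s : Set X} (h : IsOpen s) : PaperConstructible s :=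
  ⟨1, fun _ => s, fun _ => plc_open h, (iUnion_const s).symm⟩

lemma pc_union {s t : Set X} (hs : PaperConstructible s) (ht : PaperConstructible t) :
    PaperConstructible (s ∪ t) := by
  rw [pc_iff] at hs ht ⊢
  obtain ⟨S₁, h1f, h1l, rfl⟩ := hs
  obtain ⟨S₂, h2f, h2l, rfl⟩ := ht
  exact ⟨S₁ ∪ S₂, h1f.union h2f,
    fun u hu => hu.elim (h1l u) (h2l u), (sUnion_union _ _).symm⟩

lemma pc_inter {s t : Set X} (hs : PaperConstructible s) (ht : PaperConstructible t) :
    PaperConstructible (s ∩ t) := by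
  rw [pc_iff] at hs ht ⊢
  obtain ⟨S₁, h1f, h1l, rfl⟩ := hs
  obtain ⟨S₂, h2f, h2l, rfl⟩ := ht
  refine ⟨image2 (· ∩ ·) S₁ S₂, h1f.image2 _ h2f, ?_, ?_⟩
  · rintro u ⟨a, ha, b, hb, rfl⟩
    exact plc_inter (h1l a ha) (h2l b hb)
  · ext x
    simp only [mem_sUnion, mem_image2, mem_inter_iff]
    constructor
    · rintro ⟨⟨a, ha, hxa⟩, ⟨b, hb, hxb⟩⟩
      exact ⟨a ∩ b, ⟨a, ha, b, hb, rfl⟩, hxa, hxb⟩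
    · rintro ⟨u, ⟨a, ha, b, hb, rfl⟩, hxa, hxb⟩
      exact ⟨⟨a, ha, hxa⟩, ⟨b, hb, hxb⟩⟩

lemma pc_iInter : ∀ {m : ℕ} (f : Fin m → Set X), (∀ i, PaperConstructible (f i)) →
    PaperConstructible (⋂ i, f i) := by
  intro m
  induction m with
  | zero => intro f _; rw [iInter_of_empty]; exact pc_closed isClosed_univ
  | succ m IH =>
      intro f hf
      have : (⋂ i, f i) = f 0 ∩ ⋂ i : Fin m, f i.succ := by
        ext x; simp [Fin.forall_fin_succ]
      rw [this]
      exact pc_inter (hf 0) (IH _ fun i => hf i.succ)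

lemma pc_compl {s : Set X} (hs : PaperConstructible s) : PaperConstructible sᶜ := by
  obtain ⟨m, V, hV, rfl⟩ := hs
  rw [compl_iUnion]
  refine pc_iInter _ fun i => ?_
  obtain ⟨A, B, hA, hB, hi⟩ := hV i
  rw [hi]
  have : (A \ B)ᶜ = Aᶜ ∪ B := by ext x; simp [mem_diff]; tauto
  rw [this]
  exact pc_union (pc_open hA.isOpen_compl) (pc_closed hB)

lemma pc_diff {F s : Set X} (hF : IsClosed F) (hs : PaperConstructible s) :
    PaperConstructible (F \ s) :=
  pc_inter (pc_closed hF) (pc_compl hs)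

end CanonPres

namespace CanonPres

lemma irredCompOf_mono {T A B : Set X} (h : IsIrredCompOf T B) (hAB : A ⊆ B) (hTA : T ⊆ A) :
    IsIrredCompOf T A :=
  ⟨h.1, h.2.1, hTA, fun T' c i s sub => h.2.2.2 T' c i (s.trans hAB) sub⟩

lemma exists_irredCompOf [NoetherianSpace X] {F : Set X} (hF : IsClosed F) (hne : F.Nonempty) :
    ∃ T, IsIrredCompOf T F := by
  obtain ⟨S, hSfin, hScl, hSirr, rfl⟩ :=
    NoetherianSpace.exists_finite_set_isClosed_irreducible hF
  have hSne : S.Nonempty := by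
    rcases S.eq_empty_or_nonempty with rfl | h
    · simp at hne
    · exact h
  obtain ⟨T, hTS, hTmax0⟩ := hSfin.exists_maximalFor id S hSne
  have hTmax : ∀ t ∈ S, id T ⊆ id t → T = t := fun t ht h => subset_antisymm h (hTmax0 ht h)
  refine ⟨T, hScl T hTS, hSirr T hTS, subset_sUnion_of_mem hTS, ?_⟩
  intro T' hT'cl hT'irr hT'sub hTT'
  obtain ⟨t, htS, hT't⟩ := (isIrreducible_iff_sUnion_isClosed.1 hT'irr) hSfin.toFinset
    (fun z hz => hScl z (by simpa using hz)) (by rwa [hSfin.coe_toFinset])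
  have htS' : t ∈ S := by simpa using htS
  have hTt : T = t := hTmax t htS' (hTT'.trans hT't)
  exact subset_antisymm (hTt ▸ hT't) hTT'

lemma meets_open [NoetherianSpace X] {E T : Set X} (hE : PaperLocallyClosed E)
    (hT : IsIrredCompOf T (closure E)) :
    ∃ U : Set X, IsOpen U ∧ E = U ∩ closure E ∧ (T ∩ U).Nonempty := by
  obtain ⟨V, W, hV, hW, rfl⟩ := hE
  refine ⟨Wᶜ, hW.isOpen_compl, ?_, ?_⟩
  · apply subset_antisymm
    · exact subset_inter (fun x hx => hx.2) subset_closure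
    · rintro x ⟨hxW, hxcl⟩
      exact ⟨closure_minimal diff_subset hV hxcl, hxW⟩
  · by_contra hTU
    have hTW : T ⊆ W := by
      intro x hx
      by_contra hxW
      exact hTU ⟨x, hx, hxW⟩
    have hET : ∀ x, x ∈ V \ W → x ∉ T := fun x hx hxT => hx.2 (hTW hxT)
    obtain ⟨S, hSfin, hScl, hSirr, hSU⟩ :=
      NoetherianSpace.exists_finite_set_isClosed_irreducible
        (isClosed_closure (s := V \ W))
    set S' : Set (Set X) := {t ∈ S | ¬ t ⊆ T} with hS'def
    have hE' : V \ W ⊆ ⋃₀ S' := by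
      intro x hxE
      have : x ∈ ⋃₀ S := hSU ▸ subset_closure hxE
      obtain ⟨t, htS, hxt⟩ := this
      refine ⟨t, ⟨htS, fun hsub => hET x hxE (hsub hxt)⟩, hxt⟩
    have hS'fin : S'.Finite := hSfin.subset (fun t ht => ht.1)
    have hS'cl : IsClosed (⋃₀ S') := by
      rw [sUnion_eq_biUnion]
      exact hS'fin.isClosed_biUnion fun t ht => hScl t ht.1
    have hclE : closure (V \ W) ⊆ ⋃₀ S' := closure_minimal hE' hS'cl
    obtain ⟨t, htS', hTt⟩ := (isIrreducible_iff_sUnion_isClosed.1 hT.2.1) hS'fin.toFinset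
      (fun z hz => hScl z (hS'fin.mem_toFinset.1 hz).1)
      (by rw [hS'fin.coe_toFinset]; exact hT.2.2.1.trans hclE)
    rw [hS'fin.mem_toFinset] at htS'
    have heq : t = T := hT.2.2.2 t (hScl t htS'.1) (hSirr t htS'.1)
      (hSU ▸ subset_sUnion_of_mem htS'.1) hTt
    exact htS'.2 (heq ▸ Subset.rfl)

lemma exists_piece {A T : Set X} (hA : PaperConstructible A) (hT : IsIrreducible T)
    (h : T ⊆ closure A) : ∃ E, PaperLocallyClosed E ∧ E ⊆ A ∧ T ⊆ closure E := by
  classical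
  obtain ⟨m, V, hV, rfl⟩ := hA
  have h1 : closure (⋃ i, V i) ⊆ ⋃ i, closure (V i) :=
    closure_minimal (iUnion_mono fun i => subset_closure)
      (isClosed_iUnion_of_finite fun i => isClosed_closure)
  have hT2 : T ⊆ ⋃ i, closure (V i) := h.trans h1
  obtain ⟨t, ht, hTt⟩ := (isIrreducible_iff_sUnion_isClosed.1 hT)
    (Finset.univ.image fun i => closure (V i))
    (by
      intro z hz
      simp only [Finset.mem_image, Finset.mem_univ, true_and] at hz
      obtain ⟨i, rfl⟩ := hz
      exact isClosed_closure)
    (by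
      rw [Finset.coe_image, sUnion_image]
      simpa using hT2)
  simp only [Finset.mem_image, Finset.mem_univ, true_and] at ht
  obtain ⟨i, rfl⟩ := ht
  exact ⟨V i, hV i, subset_iUnion V i, hTt⟩

lemma key [NoetherianSpace X] {D : Set X} (hD : PaperConstructible D) {T : Set X}
    (hT : IsIrredCompOf T (closure D)) : ¬ T ⊆ closure (closure D \ D) := by
  intro hTsub
  obtain ⟨E, hE, hED, hTE⟩ := exists_piece hD hT.2.1 hT.2.2.1
  have hTcompE : IsIrredCompOf T (closure E) :=
    irredCompOf_mono hT (closure_mono hED) hTE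
  obtain ⟨U, hU, hEeq, hTU⟩ := meets_open hE hTcompE
  have hD' : PaperConstructible (closure D \ D) := pc_diff isClosed_closure hD
  obtain ⟨E', hE', hE'D, hTE'⟩ := exists_piece hD' hT.2.1 hTsub
  have hclDD : closure (closure D \ D) ⊆ closure D :=
    closure_minimal diff_subset isClosed_closure
  have hclsub : closure E' ⊆ closure D := (closure_mono hE'D).trans hclDD
  have hTcompE' : IsIrredCompOf T (closure E') := irredCompOf_mono hT hclsub hTE'
  obtain ⟨U', hU', hE'eq, hTU'⟩ := meets_open hE' hTcompE'
  obtain ⟨x, hxT, hxUU'⟩ := hT.2.1.2 U U' hU hU' hTU hTU'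
  have hxE : x ∈ E := hEeq ▸ (⟨hxUU'.1, hTE hxT⟩ : x ∈ U ∩ closure E)
  have hxE' : x ∈ E' := hE'eq ▸ (⟨hxUU'.2, hTE' hxT⟩ : x ∈ U' ∩ closure E')
  exact (hE'D hxE').2 (hED hxE)

end CanonPres

namespace CanonPres

lemma chain_step {m : ℕ} {V' V'' : Fin m → Set X} (hsub : ∀ i, V'' i ⊆ V' i)
    (hchain : ∀ i : Fin m, ∀ h : i.1 + 1 < m, V' ⟨i.1 + 1, h⟩ ⊆ V'' i) :
    ∀ (k : ℕ) (i j : Fin m), j.1 = i.1 + k + 1 → V' j ⊆ V'' i := by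
  intro k
  induction k with
  | zero =>
      intro i j hj
      have hlt : i.1 + 1 < m := by omega
      have : (⟨i.1 + 1, hlt⟩ : Fin m) = j := Fin.ext (by simp; omega)
      exact this ▸ hchain i hlt
  | succ k IHk =>
      intro i j hj
      have hjm : i.1 + k + 1 < m := by omega
      set jm : Fin m := ⟨i.1 + k + 1, hjm⟩ with hjmdef
      have h1 : V' j ⊆ V'' jm := by
        have hlt : jm.1 + 1 < m := by simp [hjmdef]; omega
        have : (⟨jm.1 + 1, hlt⟩ : Fin m) = j := Fin.ext (by simp [hjmdef]; omega)
        exact this ▸ hchain jm hlt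
      exact h1.trans ((hsub jm).trans (IHk i jm rfl))

lemma disjoint_of_chain {m : ℕ} {V' V'' : Fin m → Set X} (hsub : ∀ i, V'' i ⊆ V' i)
    (hchain : ∀ i : Fin m, ∀ h : i.1 + 1 < m, V' ⟨i.1 + 1, h⟩ ⊆ V'' i) :
    ∀ i j : Fin m, i ≠ j → Disjoint (V' i \ V'' i) (V' j \ V'' j) := by
  have lt_case : ∀ i j : Fin m, i.1 < j.1 → Disjoint (V' i \ V'' i) (V' j \ V'' j) := by
    intro i j hij
    have hsub' : V' j ⊆ V'' i := chain_step hsub hchain (j.1 - i.1 - 1) i j (by omega)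
    exact Set.disjoint_left.2 fun x hx hx' => hx.2 (hsub' hx'.1)
  intro i j hne
  rcases lt_trichotomy i.1 j.1 with h | h | h
  · exact lt_case i j h
  · exact absurd (Fin.ext h) hne
  · exact (lt_case j i h).symm

lemma main [NoetherianSpace X] (C : Set X) (hC : PaperConstructible C) :
    ∃ (m : ℕ) (V' V'' : Fin m → Set X),
      (∀ i, IsClosed (V' i)) ∧ (∀ i, IsClosed (V'' i)) ∧
      (∀ i, V'' i ⊆ V' i) ∧
      (∀ i : Fin m, ∀ h : i.1 + 1 < m, V' ⟨i.1 + 1, h⟩ ⊆ V'' i) ∧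
      C = ⋃ i, V' i \ V'' i ∧
      (∀ i : Fin m, ∀ T : Set X, IsIrredCompOf T (V' i) → ¬ IsIrredCompOf T (V'' i)) ∧
      (∀ i : Fin m, ∀ h : i.1 + 1 < m, ∀ T : Set X,
        IsIrredCompOf T (V'' i) → ¬ IsIrredCompOf T (V' ⟨i.1 + 1, h⟩)) ∧
      (∀ i, V' i ⊆ closure C) := by
  suffices H : ∀ F : Closeds X, ∀ C : Set X, PaperConstructible C → closure C = ↑F →
      ∃ (m : ℕ) (V' V'' : Fin m → Set X),
      (∀ i, IsClosed (V' i)) ∧ (∀ i, IsClosed (V'' i)) ∧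
      (∀ i, V'' i ⊆ V' i) ∧
      (∀ i : Fin m, ∀ h : i.1 + 1 < m, V' ⟨i.1 + 1, h⟩ ⊆ V'' i) ∧
      C = ⋃ i, V' i \ V'' i ∧
      (∀ i : Fin m, ∀ T : Set X, IsIrredCompOf T (V' i) → ¬ IsIrredCompOf T (V'' i)) ∧
      (∀ i : Fin m, ∀ h : i.1 + 1 < m, ∀ T : Set X,
        IsIrredCompOf T (V'' i) → ¬ IsIrredCompOf T (V' ⟨i.1 + 1, h⟩)) ∧
      (∀ i, V' i ⊆ closure C) by
    exact H ⟨closure C, isClosed_closure⟩ C hC rfl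
  intro F
  induction F using WellFoundedLT.induction with
  | ind F IH =>
  intro C hC hclC
  rcases C.eq_empty_or_nonempty with rfl | hne
  · exact ⟨0, Fin.elim0, Fin.elim0, fun i => i.elim0, fun i => i.elim0, fun i => i.elim0,
      fun i => i.elim0, (iUnion_of_empty _).symm, fun i => i.elim0, fun i => i.elim0,
      fun i => i.elim0⟩
  · set F₁ := closure C with hF₁def
    have hF₁cl : IsClosed F₁ := isClosed_closure
    set W : Set X := closure (F₁ \ C) with hWdef
    have hWcl : IsClosed W := isClosed_closure
    have hWsub : W ⊆ F₁ := closure_minimal diff_subset hF₁cl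
    have hFCpc : PaperConstructible (F₁ \ C) := pc_diff hF₁cl hC
    have hkey1 : ∀ T, IsIrredCompOf T F₁ → ¬ T ⊆ W := fun T hT => key hC hT
    have hWne : W ≠ F₁ := by
      intro h
      obtain ⟨T, hT⟩ := exists_irredCompOf hF₁cl hne.closure
      exact hkey1 T hT (h ▸ hT.2.2.1)
    set C' := C ∩ W with hC'def
    have hC'pc : PaperConstructible C' := pc_inter hC (pc_closed hWcl)
    have hC'cl : closure C' ⊆ W := closure_minimal inter_subset_right hWcl
    have hlt : (⟨closure C', isClosed_closure⟩ : Closeds X) < F := by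
      show closure C' < (F : Set X)
      rw [← hclC]
      exact lt_of_le_of_lt hC'cl (lt_of_le_of_ne hWsub hWne)
    obtain ⟨m, P', P'', h1, h2, h3, h4, h5, h6, h7, h8⟩ := IH _ hlt C' hC'pc rfl
    -- key fact: W \ (F₁ \ C) = C'
    have hWFC : W \ (F₁ \ C) = C' := by
      ext x
      simp only [mem_diff, mem_inter_iff, hC'def]
      constructor
      · rintro ⟨hxW, hx2⟩
        refine ⟨?_, hxW⟩
        by_contra hxC
        exact hx2 ⟨hWsub hxW, hxC⟩
      · rintro ⟨hxC, hxW⟩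
        exact ⟨hxW, fun h => h.2 hxC⟩
    have hkey2 : ∀ T, IsIrredCompOf T W → ¬ T ⊆ closure C' := by
      intro T hT hsub
      refine key hFCpc (T := T) ?_ ?_
      · exact hT
      · rw [← hWdef, hWFC]; exact hsub
    refine ⟨m + 1, Fin.cons F₁ P', Fin.cons W P'', ?_, ?_, ?_, ?_, ?_, ?_, ?_, ?_⟩
    · intro i
      refine Fin.cases ?_ ?_ i
      · exact hF₁cl
      · intro j; rw [Fin.cons_succ]; exact h1 j
    · intro i
      refine Fin.cases ?_ ?_ i
      · exact hWcl
      · intro j; rw [Fin.cons_succ]; exact h2 j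
    · intro i
      refine Fin.cases ?_ ?_ i
      · rw [Fin.cons_zero, Fin.cons_zero]; exact hWsub
      · intro j; rw [Fin.cons_succ, Fin.cons_succ]; exact h3 j
    · rintro ⟨iv, hiv⟩ h
      match iv, hiv, h with
      | 0, hiv, h =>
        have hm : 0 < m := Nat.lt_of_succ_lt_succ h
        show P' ⟨0, hm⟩ ⊆ W
        exact (h8 ⟨0, hm⟩).trans hC'cl
      | jv + 1, hiv, h =>
        have hj : jv + 1 < m := Nat.lt_of_succ_lt_succ h
        have hjv : jv < m := Nat.lt_of_succ_lt hj
        show P' ⟨jv + 1, hj⟩ ⊆ P'' ⟨jv, hjv⟩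
        exact h4 ⟨jv, hjv⟩ hj
    · have hunion : ⋃ i : Fin (m + 1), ((Fin.cons F₁ P' : Fin (m + 1) → Set X) i \
          (Fin.cons W P'' : Fin (m + 1) → Set X) i) =
          (F₁ \ W) ∪ ⋃ i : Fin m, (P' i \ P'' i) := by
        ext x
        simp only [mem_iUnion, mem_union, Fin.exists_fin_succ, Fin.cons_zero, Fin.cons_succ,
          mem_diff]
      rw [hunion, ← h5]
      apply subset_antisymm
      · intro x hx
        by_cases hxW : x ∈ W
        · exact Or.inr ⟨hx, hxW⟩
        · exact Or.inl ⟨subset_closure hx, hxW⟩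
      · rintro x (⟨hx1, hx2⟩ | hx)
        · by_contra hxC
          exact hx2 (subset_closure ⟨hx1, hxC⟩)
        · exact hx.1
    · intro i
      refine Fin.cases ?_ ?_ i
      · rw [Fin.cons_zero, Fin.cons_zero]
        intro T hT hT'
        exact hkey1 T hT hT'.2.2.1
      · intro j; rw [Fin.cons_succ, Fin.cons_succ]; exact h6 j
    · rintro ⟨iv, hiv⟩ h
      match iv, hiv, h with
      | 0, hiv, h =>
        intro T hT hT'
        have hm : 0 < m := Nat.lt_of_succ_lt_succ h
        have hT2 : IsIrredCompOf T W := hT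
        have hT2' : IsIrredCompOf T (P' ⟨0, hm⟩) := hT'
        exact hkey2 T hT2 (hT2'.2.2.1.trans (h8 ⟨0, hm⟩))
      | jv + 1, hiv, h =>
        intro T hT hT'
        have hj : jv + 1 < m := Nat.lt_of_succ_lt_succ h
        have hjv : jv < m := Nat.lt_of_succ_lt hj
        have hT2 : IsIrredCompOf T (P'' ⟨jv, hjv⟩) := hT
        have hT2' : IsIrredCompOf T (P' ⟨jv + 1, hj⟩) := hT'
        exact h7 ⟨jv, hjv⟩ hj T hT2 hT2'
    · intro i
      refine Fin.cases ?_ ?_ i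
      · rw [Fin.cons_zero]
      · intro j
        rw [Fin.cons_succ]
        exact ((h8 j).trans hC'cl).trans hWsub

end CanonPres

theorem canonical_presentation_exists
    {X : Type*} [TopologicalSpace X] [NoetherianSpace X]
    (C : Set X) (hC : PaperConstructible C) :
    ∃ (m : ℕ) (V' V'' : Fin m → Set X),
      (∀ i, IsClosed (V' i)) ∧ (∀ i, IsClosed (V'' i)) ∧
      (∀ i, V'' i ⊆ V' i) ∧
      (∀ i : Fin m, ∀ h : i.1 + 1 < m, V' ⟨i.1 + 1, h⟩ ⊆ V'' i) ∧
      C = ⋃ i, V' i \ V'' i ∧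
      (∀ i j : Fin m, i ≠ j → Disjoint (V' i \ V'' i) (V' j \ V'' j)) ∧
      (∀ i : Fin m, ∀ T : Set X, IsIrredCompOf T (V' i) → ¬ IsIrredCompOf T (V'' i)) ∧
      (∀ i : Fin m, ∀ h : i.1 + 1 < m, ∀ T : Set X,
        IsIrredCompOf T (V'' i) → ¬ IsIrredCompOf T (V' ⟨i.1 + 1, h⟩)) := by
  obtain ⟨m, V', V'', h1, h2, h3, h4, h5, h6, h7, _⟩ := CanonPres.main C hC
  exact ⟨m, V', V'', h1, h2, h3, h4, h5, CanonPres.disjoint_of_chain h3 h4, h6, h7⟩
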